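/- Let X, Y have uniformly bounded second moments over a set of probability measures 𝒫, and set U = (X+Y)/2, V = (X−Y)/2, Ē[Z] = sup_{P∈𝒫} E_P[Z]. Then the upper covariance C̄(X,Y) = sup_{P∈conv(𝒫)} Cov_P(X,Y) equals sup over β ∈ ℝ of inf over α ∈ ℝ of Ē[(U−α)² − (V−β)²]. In particular, taking Y = X gives C̄(X,X) = V̄(X), the upper variance. -/

import Mathlib

set_option maxHeartbeats 1000000

open MeasureTheory ENNReal

variable {Ω : Type*} [MeasurableSpace Ω]

/-- Classical covariance of `X` and `Y` under `P`. -/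
noncomputable def covP (P : Measure Ω) (X Y : Ω → ℝ) : ℝ :=
  (∫ ω, X ω * Y ω ∂P) - (∫ ω, X ω ∂P) * (∫ ω, Y ω ∂P)

/-- Classical variance of `X` under `P`. -/
noncomputable def varP (P : Measure Ω) (X : Ω → ℝ) : ℝ :=
  (∫ ω, (X ω) ^ 2 ∂P) - (∫ ω, X ω ∂P) ^ 2

/-- The convex hull of a set of measures: all finite convex combinations. -/
def convHullP (S : Set (Measure Ω)) : Set (Measure Ω) :=
  { Q | ∃ (n : ℕ) (w : Fin n → ℝ≥0∞) (P : Fin n → Measure Ω),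
      (∑ i, w i = 1) ∧ (∀ i, P i ∈ S) ∧ Q = ∑ i, w i • P i }

lemma pair_quad {m₁ c₁ m₂ c₂ t' : ℝ}
    (hG : ∀ α : ℝ, t' ≤ α^2 - 2*m₁*α + c₁ ∨ t' ≤ α^2 - 2*m₂*α + c₂) :
    ∃ lam : ℝ, 0 ≤ lam ∧ lam ≤ 1 ∧
      t' ≤ (lam*c₁ + (1-lam)*c₂) - (lam*m₁ + (1-lam)*m₂)^2 := by
  by_cases h1 : t' ≤ c₁ - m₁^2
  · exact ⟨1, by norm_num, by norm_num, by nlinarith⟩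
  by_cases h2 : t' ≤ c₂ - m₂^2
  · exact ⟨0, by norm_num, by norm_num, by nlinarith⟩
  push_neg at h1 h2
  obtain ⟨r₁, hr₁pos, hr₁sq⟩ : ∃ r : ℝ, 0 < r ∧ r^2 = t' - (c₁ - m₁^2) :=
    ⟨Real.sqrt _, Real.sqrt_pos.mpr (by linarith), Real.sq_sqrt (by linarith)⟩
  obtain ⟨r₂, hr₂pos, hr₂sq⟩ : ∃ r : ℝ, 0 < r ∧ r^2 = t' - (c₂ - m₂^2) :=
    ⟨Real.sqrt _, Real.sqrt_pos.mpr (by linarith), Real.sq_sqrt (by linarith)⟩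
  have hSpos : 0 < r₁ + r₂ := by linarith
  -- disjointness: (m₁ - m₂)² ≥ (r₁ + r₂)²
  have hD : (r₁ + r₂)^2 ≤ (m₁ - m₂)^2 := by
    by_contra hcon
    push_neg at hcon
    obtain ⟨p, hp⟩ : ∃ p : ℝ, p * (r₁ + r₂) = r₂*m₁ + r₁*m₂ :=
      ⟨(r₂*m₁ + r₁*m₂)/(r₁+r₂), div_mul_cancel₀ _ hSpos.ne'⟩
    have e₁ : (p - m₁)*(r₁+r₂) = r₁*(m₂ - m₁) := by linear_combination hp
    have e₂ : (p - m₂)*(r₁+r₂) = r₂*(m₁ - m₂) := by linear_combination hp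
    have hb₁ : (p - m₁)^2 < r₁^2 := by
      have h3 : ((p - m₁)*(r₁+r₂))^2 < (r₁*(r₁+r₂))^2 := by
        rw [e₁]
        calc (r₁*(m₂-m₁))^2 = r₁^2*(m₂-m₁)^2 := by ring
        _ < r₁^2*(r₁+r₂)^2 := by
            apply mul_lt_mul_of_pos_left _ (by positivity)
            nlinarith
        _ = (r₁*(r₁+r₂))^2 := by ring
      nlinarith [sq_nonneg (r₁+r₂)]
    have hb₂ : (p - m₂)^2 < r₂^2 := by
      have h3 : ((p - m₂)*(r₁+r₂))^2 < (r₂*(r₁+r₂))^2 := by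
        rw [e₂]
        calc (r₂*(m₁-m₂))^2 = r₂^2*(m₁-m₂)^2 := by ring
        _ < r₂^2*(r₁+r₂)^2 := by
            apply mul_lt_mul_of_pos_left _ (by positivity)
            nlinarith
        _ = (r₂*(r₁+r₂))^2 := by ring
      nlinarith [sq_nonneg (r₁+r₂)]
    rcases hG p with h | h
    · nlinarith
    · nlinarith
  obtain ⟨lam, hlamdef⟩ : ∃ l : ℝ, l = r₂ / (r₁ + r₂) := ⟨_, rfl⟩
  have hlam0 : 0 ≤ lam := by rw [hlamdef]; positivity
  have hlam1 : lam ≤ 1 := by rw [hlamdef, div_le_one hSpos]; linarith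
  have key : lam * (1 - lam) * (r₁+r₂)^2 = r₁ * r₂ := by
    rw [hlamdef]; field_simp; ring
  have key2 : lam * (t' - (c₁ - m₁^2)) + (1 - lam) * (t' - (c₂ - m₂^2)) = r₁ * r₂ := by
    rw [← hr₁sq, ← hr₂sq, hlamdef]; field_simp; ring
  refine ⟨lam, hlam0, hlam1, ?_⟩
  have id1 : (lam*c₁ + (1-lam)*c₂) - (lam*m₁ + (1-lam)*m₂)^2
      = -(lam * (t' - (c₁ - m₁^2)) + (1 - lam) * (t' - (c₂ - m₂^2)))
        + lam * (1 - lam) * (m₁ - m₂)^2 + t' := by ring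
  nlinarith [mul_le_mul_of_nonneg_left hD (mul_nonneg hlam0 (by linarith : 0 ≤ 1 - lam)),
    key, key2, id1]

/-- Abstract minimax lemma for families of monic quadratics with convexity. -/
lemma lemA {ι : Type*} [Nonempty ι] (m c : ι → ℝ) (B : ℝ)
    (hm : ∀ i, |m i| ≤ B) (hc : ∀ i, |c i| ≤ B)
    (hconv : ∀ i j, ∀ t : ℝ, 0 ≤ t → t ≤ 1 →
      ∃ k, m k = t * m i + (1-t) * m j ∧ c k = t * c i + (1-t) * c j) :
    (⨅ α : ℝ, ⨆ i, (α^2 - 2*m i*α + c i)) = ⨆ i, (c i - (m i)^2) := by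
  obtain ⟨i₀⟩ := (inferInstance : Nonempty ι)
  have hB : 0 ≤ B := le_trans (abs_nonneg _) (hm i₀)
  -- basic product bound
  have habs : ∀ i (α : ℝ), |m i * α| ≤ B * |α| := fun i α => by
    rw [abs_mul]
    exact mul_le_mul_of_nonneg_right (hm i) (abs_nonneg α)
  have hq_ub : ∀ (α : ℝ) i, α^2 - 2*m i*α + c i ≤ α^2 + 2*B*|α| + B := fun α i => by
    have h1 := abs_le.mp (habs i α)
    have h2 := abs_le.mp (hc i)
    nlinarith [h1.1, h1.2, h2.1, h2.2]
  have hq_lb : ∀ (α : ℝ) i, α^2 - 2*B*|α| - B ≤ α^2 - 2*m i*α + c i := fun α i => by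
    have h1 := abs_le.mp (habs i α)
    have h2 := abs_le.mp (hc i)
    nlinarith [h1.1, h1.2, h2.1, h2.2]
  have hq_bdd : ∀ α : ℝ, BddAbove (Set.range fun i => α^2 - 2*m i*α + c i) :=
    fun α => ⟨α^2 + 2*B*|α| + B, by rintro x ⟨i, rfl⟩; exact hq_ub α i⟩
  have hψ_ge : ∀ (α : ℝ) i, α^2 - 2*m i*α + c i ≤ ⨆ j, (α^2 - 2*m j*α + c j) :=
    fun α i => le_ciSup (hq_bdd α) i
  have hψ_ub : ∀ α : ℝ, (⨆ j, (α^2 - 2*m j*α + c j)) ≤ α^2 + 2*B*|α| + B :=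
    fun α => ciSup_le (hq_ub α)
  have hψ_lb : ∀ α : ℝ, α^2 - 2*B*|α| - B ≤ ⨆ j, (α^2 - 2*m j*α + c j) :=
    fun α => le_trans (hq_lb α i₀) (hψ_ge α i₀)
  have hs_bdd : BddAbove (Set.range fun i => c i - (m i)^2) :=
    ⟨B, by rintro x ⟨i, rfl⟩; simp only; nlinarith [(abs_le.mp (hc i)).2, sq_nonneg (m i)]⟩
  have hI_bdd : BddBelow (Set.range fun α : ℝ => ⨆ j, (α^2 - 2*m j*α + c j)) := by
    refine ⟨-(B^2) - B, ?_⟩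
    rintro x ⟨α, rfl⟩
    refine le_trans ?_ (hψ_lb α)
    nlinarith [sq_nonneg (|α| - B), sq_abs α]
  have hIle : ∀ α : ℝ, (⨅ α' : ℝ, ⨆ j, (α'^2 - 2*m j*α' + c j)) ≤ ⨆ j, (α^2 - 2*m j*α + c j) :=
    fun α => ciInf_le hI_bdd α
  apply le_antisymm
  · -- hard direction
    refine le_of_forall_pos_le_add fun ε hε => ?_
    set L : ℝ := 6*B + 6 with hLdef
    have hL : 0 < L := by positivity
    set δ : ℝ := min 1 (ε / (2*L + 2)) with hδdef
    have hδpos : 0 < δ := lt_min one_pos (div_pos hε (by positivity))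
    have hδ1 : δ ≤ 1 := min_le_left _ _
    have hδε : (2*L + 2) * δ ≤ ε := by
      have h := min_le_right 1 (ε / (2*L + 2))
      calc (2*L+2) * δ ≤ (2*L+2) * (ε / (2*L+2)) :=
            mul_le_mul_of_nonneg_left h (by positivity)
      _ = ε := by field_simp
    set η : ℝ := δ^2 / 2 with hηdef
    have hηpos : 0 < η := by positivity
    have hηδ : η ≤ δ / 2 := by
      rw [hηdef]
      nlinarith
    -- near-minimizer
    obtain ⟨α₀, hα₀⟩ : ∃ α : ℝ, (⨆ j, (α^2 - 2*m j*α + c j)) <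
        (⨅ α' : ℝ, ⨆ j, (α'^2 - 2*m j*α' + c j)) + η :=
      exists_lt_of_ciInf_lt (lt_add_of_pos_right _ hηpos)
    set I : ℝ := ⨅ α' : ℝ, ⨆ j, (α'^2 - 2*m j*α' + c j) with hIdef
    have hα₀I : I ≤ ⨆ j, (α₀^2 - 2*m j*α₀ + c j) := hIle α₀
    have hψ0 : I ≤ B := le_trans (hIle 0) (by simpa using hψ_ub 0)
    have hψα₀_le : (⨆ j, (α₀^2 - 2*m j*α₀ + c j)) ≤ B + 1 := by
      have : η ≤ 1 := le_trans hηδ (by linarith)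
      linarith
    have habs_α₀ : |α₀| ≤ 2*B + 2 := by
      by_contra hcon
      push_neg at hcon
      have h1 := hψ_lb α₀
      nlinarith [mul_pos (by linarith : (0:ℝ) < |α₀| - (2*B+2))
        (by positivity : (0:ℝ) < |α₀| + 2), sq_abs α₀]
    have hα₀ub := abs_le.mp habs_α₀
    -- near maximizers at α₀ ± δ
    obtain ⟨i₁, hi₁⟩ : ∃ i, (⨆ j, ((α₀+δ)^2 - 2*m j*(α₀+δ) + c j)) - η <
        (α₀+δ)^2 - 2*m i*(α₀+δ) + c i :=
      exists_lt_of_lt_ciSup (by linarith [hηpos] :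
        (⨆ j, ((α₀+δ)^2 - 2*m j*(α₀+δ) + c j)) - η < ⨆ j, ((α₀+δ)^2 - 2*m j*(α₀+δ) + c j))
    obtain ⟨i₂, hi₂⟩ : ∃ i, (⨆ j, ((α₀-δ)^2 - 2*m j*(α₀-δ) + c j)) - η <
        (α₀-δ)^2 - 2*m i*(α₀-δ) + c i :=
      exists_lt_of_lt_ciSup (by linarith [hηpos] :
        (⨆ j, ((α₀-δ)^2 - 2*m j*(α₀-δ) + c j)) - η < ⨆ j, ((α₀-δ)^2 - 2*m j*(α₀-δ) + c j))
    have hI₁ : I - η < (α₀+δ)^2 - 2*m i₁*(α₀+δ) + c i₁ := by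
      have := hIle (α₀+δ); linarith
    have hI₂ : I - η < (α₀-δ)^2 - 2*m i₂*(α₀-δ) + c i₂ := by
      have := hIle (α₀-δ); linarith
    have hup₁ : α₀^2 - 2*m i₁*α₀ + c i₁ < I + η := lt_of_le_of_lt (hψ_ge α₀ i₁) hα₀
    have hup₂ : α₀^2 - 2*m i₂*α₀ + c i₂ < I + η := lt_of_le_of_lt (hψ_ge α₀ i₂) hα₀
    -- vertex locations
    have hm₁ : m i₁ ≤ α₀ + δ := by
      by_contra hcm
      push_neg at hcm
      nlinarith [mul_pos hδpos (sub_pos.mpr hcm)]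
    have hm₂ : α₀ - δ ≤ m i₂ := by
      by_contra hcm
      push_neg at hcm
      nlinarith [mul_pos hδpos (sub_pos.mpr hcm)]
    -- lower bound on max of the two quadratics
    have hG : ∀ α : ℝ, I - 3*η - 2*L*δ ≤ α^2 - 2*m i₁*α + c i₁ ∨
        I - 3*η - 2*L*δ ≤ α^2 - 2*m i₂*α + c i₂ := by
      intro α
      have hLδ : 0 ≤ 2*L*δ := by positivity
      rcases le_total α (α₀ - δ) with h | h
      · right
        have hmono : (α₀-δ)^2 - 2*m i₂*(α₀-δ) + c i₂ ≤ α^2 - 2*m i₂*α + c i₂ := by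
          nlinarith [mul_nonneg (sub_nonneg.mpr h)
            (by linarith : (0:ℝ) ≤ 2*m i₂ - (α + (α₀-δ)))]
        linarith
      rcases le_total (α₀ + δ) α with h' | h'
      · left
        have hmono : (α₀+δ)^2 - 2*m i₁*(α₀+δ) + c i₁ ≤ α^2 - 2*m i₁*α + c i₁ := by
          nlinarith [mul_nonneg (sub_nonneg.mpr h') (by linarith : 0 ≤ α + (α₀+δ) - 2*m i₁)]
        linarith
      · left
        -- middle region: Lipschitz bound
        have hmb := abs_le.mp (hm i₁)
        have hdiff : (α₀+δ)^2 - 2*m i₁*(α₀+δ) + c i₁ - (α^2 - 2*m i₁*α + c i₁)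
            = ((α₀+δ) - α) * ((α₀+δ) + α - 2*m i₁) := by ring
        have hb1 : 0 ≤ (α₀+δ) - α := by linarith
        have hb1' : (α₀+δ) - α ≤ 2*δ := by linarith
        have hb2 : |(α₀+δ) + α - 2*m i₁| ≤ L := by
          rw [abs_le]
          constructor <;> [skip; skip] <;> rw [hLdef] <;> linarith
        have : ((α₀+δ) - α) * ((α₀+δ) + α - 2*m i₁) ≤ 2*δ*L := by
          calc ((α₀+δ) - α) * ((α₀+δ) + α - 2*m i₁) ≤ ((α₀+δ) - α) * L := by
                have := (abs_le.mp hb2).2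
                exact mul_le_mul_of_nonneg_left this hb1
          _ ≤ 2*δ*L := mul_le_mul_of_nonneg_right hb1' (le_of_lt hL)
        linarith
    -- apply pair lemma
    obtain ⟨lam, hl0, hl1, hlkey⟩ := pair_quad hG
    obtain ⟨k, hkm, hkc⟩ := hconv i₁ i₂ lam hl0 hl1
    have hk : I - 3*η - 2*L*δ ≤ c k - (m k)^2 := by
      rw [hkm, hkc]
      calc I - 3*η - 2*L*δ ≤ (lam*c i₁ + (1-lam)*c i₂) - (lam*m i₁ + (1-lam)*m i₂)^2 := hlkey
      _ = (lam * c i₁ + (1-lam) * c i₂) - (lam * m i₁ + (1-lam) * m i₂)^2 := by ring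
    have hks : c k - (m k)^2 ≤ ⨆ i, (c i - (m i)^2) := le_ciSup hs_bdd k
    have herr : 3*η + 2*L*δ ≤ ε := by
      have : 3*η ≤ 2*δ := by linarith [hηδ, hδpos.le]
      linarith
    linarith
  · -- easy direction
    refine le_ciInf fun α => ciSup_le fun i => ?_
    refine le_trans ?_ (hψ_ge α i)
    nlinarith [sq_nonneg (α - m i)]

lemma mem_conv_self {S : Set (Measure Ω)} {P : Measure Ω} (hP : P ∈ S) : P ∈ convHullP S :=
  ⟨1, fun _ => 1, fun _ => P, by simp, fun _ => hP, by simp⟩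

lemma weight_ne_top {n : ℕ} {w : Fin n → ℝ≥0∞} (hw : ∑ i, w i = 1) (i : Fin n) : w i ≠ ∞ := by
  intro h
  have : w i ≤ 1 := hw ▸ Finset.single_le_sum (fun j _ => (zero_le : 0 ≤ w j)) (Finset.mem_univ i)
  rw [h] at this
  exact (by simp : ¬ (∞:ℝ≥0∞) ≤ 1) this

lemma weight_toReal_sum {n : ℕ} {w : Fin n → ℝ≥0∞} (hw : ∑ i, w i = 1) :
    ∑ i, (w i).toReal = 1 := by
  rw [← ENNReal.toReal_sum (fun i _ => weight_ne_top hw i), hw, ENNReal.toReal_one]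

lemma conv_prob {S : Set (Measure Ω)} (hprob : ∀ P ∈ S, IsProbabilityMeasure P)
    {Q : Measure Ω} (hQ : Q ∈ convHullP S) : IsProbabilityMeasure Q := by
  obtain ⟨n, w, P, hw, hPS, rfl⟩ := hQ
  constructor
  rw [Measure.finset_sum_apply]
  have : ∀ i : Fin n, (w i • P i) Set.univ = w i := fun i => by
    haveI := hprob (P i) (hPS i)
    simp [Measure.smul_apply, measure_univ]
  simp_rw [this]
  exact hw

lemma conv_integrable {S : Set (Measure Ω)} {f : Ω → ℝ} (hf : ∀ P ∈ S, Integrable f P)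
    {Q : Measure Ω} (hQ : Q ∈ convHullP S) : Integrable f Q := by
  obtain ⟨n, w, P, hw, hPS, rfl⟩ := hQ
  rw [integrable_finset_sum_measure]
  exact fun i _ => (hf (P i) (hPS i)).smul_measure (weight_ne_top hw i)

lemma conv_integral_le {S : Set (Measure Ω)} {f : Ω → ℝ} (hf : ∀ P ∈ S, Integrable f P)
    {K : ℝ} (hK : ∀ P ∈ S, ∫ ω, f ω ∂P ≤ K)
    {Q : Measure Ω} (hQ : Q ∈ convHullP S) : ∫ ω, f ω ∂Q ≤ K := by
  obtain ⟨n, w, P, hw, hPS, rfl⟩ := hQ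
  rw [integral_finset_sum_measure
    (fun i _ => (hf (P i) (hPS i)).smul_measure (weight_ne_top hw i))]
  have step : ∀ i : Fin n, ∫ ω, f ω ∂(w i • P i) = (w i).toReal * ∫ ω, f ω ∂(P i) := by
    intro i
    rw [integral_smul_measure]
    rfl
  simp_rw [step]
  calc ∑ i, (w i).toReal * ∫ ω, f ω ∂(P i) ≤ ∑ i, (w i).toReal * K := by
        apply Finset.sum_le_sum
        intro i _
        exact mul_le_mul_of_nonneg_left (hK (P i) (hPS i)) ENNReal.toReal_nonneg
  _ = K := by rw [← Finset.sum_mul, weight_toReal_sum hw, one_mul]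

lemma integral_mix {Q₁ Q₂ : Measure Ω} {f : Ω → ℝ} (h₁ : Integrable f Q₁)
    (h₂ : Integrable f Q₂) {t : ℝ} (ht0 : 0 ≤ t) (ht1 : t ≤ 1) :
    ∫ ω, f ω ∂(ENNReal.ofReal t • Q₁ + ENNReal.ofReal (1-t) • Q₂)
      = t * ∫ ω, f ω ∂Q₁ + (1-t) * ∫ ω, f ω ∂Q₂ := by
  rw [integral_add_measure (h₁.smul_measure ofReal_ne_top) (h₂.smul_measure ofReal_ne_top),
    integral_smul_measure, integral_smul_measure, ENNReal.toReal_ofReal ht0,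
    ENNReal.toReal_ofReal (by linarith : (0:ℝ) ≤ 1 - t)]
  rfl

lemma conv_mix {S : Set (Measure Ω)} {Q₁ Q₂ : Measure Ω} (h₁ : Q₁ ∈ convHullP S)
    (h₂ : Q₂ ∈ convHullP S) {t : ℝ} (ht0 : 0 ≤ t) (ht1 : t ≤ 1) :
    ENNReal.ofReal t • Q₁ + ENNReal.ofReal (1-t) • Q₂ ∈ convHullP S := by
  obtain ⟨n₁, w₁, P₁, hw₁, hPS₁, rfl⟩ := h₁
  obtain ⟨n₂, w₂, P₂, hw₂, hPS₂, rfl⟩ := h₂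
  refine ⟨n₁ + n₂, Fin.append (fun i => ENNReal.ofReal t * w₁ i)
      (fun i => ENNReal.ofReal (1-t) * w₂ i), Fin.append P₁ P₂, ?_, ?_, ?_⟩
  · rw [Fin.sum_univ_add]
    simp only [Fin.append_left, Fin.append_right]
    rw [← Finset.mul_sum, ← Finset.mul_sum, hw₁, hw₂, mul_one, mul_one,
      ← ENNReal.ofReal_add ht0 (by linarith), add_sub_cancel, ENNReal.ofReal_one]
  · intro i
    rcases Nat.lt_or_ge i.val n₁ with h | h
    · have : Fin.append P₁ P₂ i = P₁ (i.castLT h) := by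
        have := Fin.append_left P₁ P₂ (i.castLT h)
        rwa [show Fin.castAdd n₂ (i.castLT h) = i from Fin.ext rfl] at this
      rw [this]; exact hPS₁ _
    · have hlt : i.val - n₁ < n₂ := by omega
      have hi : i = Fin.natAdd n₁ ⟨i.val - n₁, hlt⟩ := by
        apply Fin.ext; simp; omega
      rw [hi, Fin.append_right]; exact hPS₂ _
  · rw [Fin.sum_univ_add]
    simp only [Fin.append_left, Fin.append_right]
    rw [Finset.smul_sum, Finset.smul_sum]
    congr 1 <;> (apply Finset.sum_congr rfl; intro i _; rw [smul_smul])

/-- Transfer a sup over `S` to a sup over the convex hull. -/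
lemma sSup_image_conv {S : Set (Measure Ω)} (hS : S.Nonempty) {f : Ω → ℝ}
    (hf : ∀ P ∈ S, Integrable f P) {K : ℝ} (hK : ∀ P ∈ S, ∫ ω, f ω ∂P ≤ K) :
    sSup ((fun P => ∫ ω, f ω ∂P) '' S) = ⨆ Q : convHullP S, ∫ ω, f ω ∂(Q : Measure Ω) := by
  haveI : Nonempty (convHullP S) := ⟨⟨hS.choose, mem_conv_self hS.choose_spec⟩⟩
  apply le_antisymm
  · apply csSup_le (hS.image _)
    rintro x ⟨P, hP, rfl⟩
    exact le_ciSup (f := fun Q : convHullP S => ∫ ω, f ω ∂(Q : Measure Ω))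
      ⟨K, by rintro y ⟨Q, rfl⟩; exact conv_integral_le hf hK Q.2⟩ ⟨P, mem_conv_self hP⟩
  · apply ciSup_le
    rintro ⟨Q, hQ⟩
    refine conv_integral_le hf (fun P hP => ?_) hQ
    exact le_csSup (s := (fun P => ∫ ω, f ω ∂P) '' S)
      ⟨K, by rintro y ⟨P', hP', rfl⟩; exact hK P' hP'⟩ ⟨P, hP, rfl⟩

lemma expand_poly (P : Measure Ω) [IsProbabilityMeasure P] {X Y : Ω → ℝ}
    (iX : Integrable X P) (iY : Integrable Y P)
    (iXY : Integrable (fun ω => X ω * Y ω) P) (α β : ℝ) :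
    ∫ ω, (((X ω + Y ω)/2 - α)^2 - ((X ω - Y ω)/2 - β)^2) ∂P
      = (∫ ω, X ω * Y ω ∂P) + (β - α)*(∫ ω, X ω ∂P) + (-α - β)*(∫ ω, Y ω ∂P)
        + (α^2 - β^2) := by
  have h : ∀ ω : Ω, ((X ω + Y ω)/2 - α)^2 - ((X ω - Y ω)/2 - β)^2
      = X ω * Y ω + ((β - α) * X ω + ((-α - β) * Y ω + (α^2 - β^2))) := fun ω => by ring
  simp_rw [h]
  have i1 : Integrable (fun ω => (-α - β) * Y ω + (α^2 - β^2)) P :=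
    (iY.const_mul _).add (integrable_const _)
  have i2 : Integrable (fun ω => (β - α) * X ω + ((-α - β) * Y ω + (α^2 - β^2))) P :=
    (iX.const_mul _).add i1
  rw [integral_add iXY i2, integral_add (iX.const_mul _) i1,
    integral_add (iY.const_mul _) (integrable_const _),
    integral_const_mul, integral_const_mul, integral_const]
  simp [measure_univ]
  ring

lemma expand_sq (P : Measure Ω) [IsProbabilityMeasure P] {X : Ω → ℝ}
    (iX : Integrable X P) (iXX : Integrable (fun ω => X ω^2) P) (μ : ℝ) :
    ∫ ω, (X ω - μ)^2 ∂P = μ^2 - 2*(∫ ω, X ω ∂P)*μ + ∫ ω, X ω^2 ∂P := by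
  have h : ∀ ω : Ω, (X ω - μ)^2 = X ω^2 + ((-2*μ) * X ω + μ^2) := fun ω => by ring
  simp_rw [h]
  have i1 : Integrable (fun ω => (-2*μ) * X ω + μ^2) P :=
    (iX.const_mul _).add (integrable_const _)
  rw [integral_add iXX i1, integral_add (iX.const_mul _) (integrable_const _),
    integral_const_mul, integral_const]
  simp [measure_univ]
  ring

lemma abs_integral_le_of_sq (P : Measure Ω) [IsProbabilityMeasure P] {f : Ω → ℝ}
    (hf : Integrable f P) (hf2 : Integrable (fun ω => f ω^2) P) :
    |∫ ω, f ω ∂P| ≤ (1 + ∫ ω, f ω^2 ∂P)/2 := by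
  have key : ∀ g : Ω → ℝ, Integrable g P → (∀ ω, g ω ≤ (1 + f ω^2)/2) →
      ∫ ω, g ω ∂P ≤ (1 + ∫ ω, f ω^2 ∂P)/2 := by
    intro g hg hle
    have h1 : ∫ ω, g ω ∂P ≤ ∫ ω, (1 + f ω^2)/2 ∂P :=
      integral_mono hg (((integrable_const 1).add hf2).div_const 2) hle
    have h2 : ∫ ω, (1 + f ω^2)/2 ∂P = (1 + ∫ ω, f ω^2 ∂P)/2 := by
      rw [integral_div, integral_add (integrable_const 1) hf2, integral_const]
      simp [measure_univ]
    linarith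
  rw [abs_le]
  constructor
  · have := key (fun ω => -(f ω)) hf.neg (fun ω => by nlinarith [sq_nonneg (f ω + 1)])
    rw [integral_neg] at this
    linarith
  · exact key f hf (fun ω => by nlinarith [sq_nonneg (f ω - 1)])

lemma abs_integral_mul_le (P : Measure Ω) [IsProbabilityMeasure P] {X Y : Ω → ℝ}
    (iXY : Integrable (fun ω => X ω * Y ω) P)
    (iXX : Integrable (fun ω => X ω^2) P) (iYY : Integrable (fun ω => Y ω^2) P) :
    |∫ ω, X ω * Y ω ∂P| ≤ ((∫ ω, X ω^2 ∂P) + ∫ ω, Y ω^2 ∂P)/2 := by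
  have key : ∀ g : Ω → ℝ, Integrable g P → (∀ ω, g ω ≤ (X ω^2 + Y ω^2)/2) →
      ∫ ω, g ω ∂P ≤ ((∫ ω, X ω^2 ∂P) + ∫ ω, Y ω^2 ∂P)/2 := by
    intro g hg hle
    have h1 : ∫ ω, g ω ∂P ≤ ∫ ω, (X ω^2 + Y ω^2)/2 ∂P :=
      integral_mono hg ((iXX.add iYY).div_const 2) hle
    have h2 : ∫ ω, (X ω^2 + Y ω^2)/2 ∂P = ((∫ ω, X ω^2 ∂P) + ∫ ω, Y ω^2 ∂P)/2 := by
      rw [integral_div, integral_add iXX iYY]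
    linarith
  rw [abs_le]
  constructor
  · have := key (fun ω => -(X ω * Y ω)) iXY.neg (fun ω => by nlinarith [sq_nonneg (X ω + Y ω)])
    rw [integral_neg] at this
    linarith
  · exact key _ iXY (fun ω => by nlinarith [sq_nonneg (X ω - Y ω)])

theorem stmt17 (S : Set (Measure Ω)) (hS : S.Nonempty)
    (hprob : ∀ P ∈ S, IsProbabilityMeasure P) (X Y : Ω → ℝ)
    (hXY : ∀ P ∈ S, MemLp X 2 P ∧ MemLp Y 2 P)
    (hbdd : BddAbove ((fun P => (∫ ω, (X ω) ^ 2 ∂P) + ∫ ω, (Y ω) ^ 2 ∂P) '' S))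
    (U V : Ω → ℝ) (hU : U = fun ω => (X ω + Y ω) / 2) (hV : V = fun ω => (X ω - Y ω) / 2) :
    (sSup ((fun P => covP P X Y) '' convHullP S) =
      ⨆ β : ℝ, ⨅ α : ℝ,
        sSup ((fun P => ∫ ω, ((U ω - α) ^ 2 - (V ω - β) ^ 2) ∂P) '' S)) ∧
    (sSup ((fun P => covP P X X) '' convHullP S) =
      ⨅ μ : ℝ, sSup ((fun P => ∫ ω, (X ω - μ) ^ 2 ∂P) '' S)) := by
  simp only [hU, hV]
  obtain ⟨P₀, hP₀⟩ := hS
  have hS' : S.Nonempty := ⟨P₀, hP₀⟩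
  haveI hne : Nonempty (convHullP S) := ⟨⟨P₀, mem_conv_self hP₀⟩⟩
  obtain ⟨B₀, hB₀⟩ := hbdd
  set B := max B₀ 0 with hBdef
  have hBnn : 0 ≤ B := le_max_right _ _
  have hBS : ∀ P ∈ S, (∫ ω, X ω^2 ∂P) + (∫ ω, Y ω^2 ∂P) ≤ B := fun P hP => by
    have := hB₀ (Set.mem_image_of_mem _ hP)
    exact le_trans this (le_max_left _ _)
  -- integrability over S
  have iX : ∀ P ∈ S, Integrable X P := fun P hP => by
    haveI := hprob P hP
    exact (hXY P hP).1.integrable one_le_two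
  have iY : ∀ P ∈ S, Integrable Y P := fun P hP => by
    haveI := hprob P hP
    exact (hXY P hP).2.integrable one_le_two
  have iXX : ∀ P ∈ S, Integrable (fun ω => X ω^2) P := fun P hP => (hXY P hP).1.integrable_sq
  have iYY : ∀ P ∈ S, Integrable (fun ω => Y ω^2) P := fun P hP => (hXY P hP).2.integrable_sq
  have iXY : ∀ P ∈ S, Integrable (fun ω => X ω * Y ω) P := fun P hP => by
    have h : (fun ω => X ω * Y ω) = fun ω => ((X ω + Y ω)^2 - X ω^2 - Y ω^2)/2 :=
      funext fun ω => by ring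
    rw [h]
    exact ((((hXY P hP).1.add (hXY P hP).2).integrable_sq.sub
      (hXY P hP).1.integrable_sq).sub (hXY P hP).2.integrable_sq).div_const 2
  -- conv-hull level facts
  have cprob : ∀ Q : convHullP S, IsProbabilityMeasure (Q : Measure Ω) :=
    fun Q => conv_prob hprob Q.2
  have cX : ∀ Q : convHullP S, Integrable X (Q : Measure Ω) := fun Q => conv_integrable iX Q.2
  have cY : ∀ Q : convHullP S, Integrable Y (Q : Measure Ω) := fun Q => conv_integrable iY Q.2
  have cXX : ∀ Q : convHullP S, Integrable (fun ω => X ω^2) (Q : Measure Ω) :=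
    fun Q => conv_integrable iXX Q.2
  have cYY : ∀ Q : convHullP S, Integrable (fun ω => Y ω^2) (Q : Measure Ω) :=
    fun Q => conv_integrable iYY Q.2
  have cXY : ∀ Q : convHullP S, Integrable (fun ω => X ω * Y ω) (Q : Measure Ω) :=
    fun Q => conv_integrable iXY Q.2
  have cB : ∀ Q : convHullP S,
      (∫ ω, X ω^2 ∂(Q : Measure Ω)) + (∫ ω, Y ω^2 ∂(Q : Measure Ω)) ≤ B := by
    intro Q
    have h1 : ∫ ω, (X ω^2 + Y ω^2) ∂(Q : Measure Ω) ≤ B :=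
      conv_integral_le (f := fun ω => X ω^2 + Y ω^2)
        (fun P hP => by exact (iXX P hP).add (iYY P hP))
        (fun P hP => by rw [integral_add (iXX P hP) (iYY P hP)]; exact hBS P hP) Q.2
    rwa [integral_add (cXX Q) (cYY Q)] at h1
  have cXXnn : ∀ Q : convHullP S, 0 ≤ ∫ ω, X ω^2 ∂(Q : Measure Ω) :=
    fun Q => integral_nonneg fun ω => sq_nonneg _
  have cYYnn : ∀ Q : convHullP S, 0 ≤ ∫ ω, Y ω^2 ∂(Q : Measure Ω) :=
    fun Q => integral_nonneg fun ω => sq_nonneg _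
  have cXb : ∀ Q : convHullP S, |∫ ω, X ω ∂(Q : Measure Ω)| ≤ 1 + B := fun Q => by
    haveI := cprob Q
    have h := abs_integral_le_of_sq (Q : Measure Ω) (cX Q) (cXX Q)
    have h2 := cB Q
    have h3 := cYYnn Q
    have h4 := cXXnn Q
    calc |∫ ω, X ω ∂(Q : Measure Ω)| ≤ (1 + ∫ ω, X ω^2 ∂(Q : Measure Ω))/2 := h
    _ ≤ 1 + B := by linarith
  have cYb : ∀ Q : convHullP S, |∫ ω, Y ω ∂(Q : Measure Ω)| ≤ 1 + B := fun Q => by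
    haveI := cprob Q
    have h := abs_integral_le_of_sq (Q : Measure Ω) (cY Q) (cYY Q)
    have h2 := cB Q
    have h3 := cYYnn Q
    have h4 := cXXnn Q
    calc |∫ ω, Y ω ∂(Q : Measure Ω)| ≤ (1 + ∫ ω, Y ω^2 ∂(Q : Measure Ω))/2 := h
    _ ≤ 1 + B := by linarith
  have cXYb : ∀ Q : convHullP S, |∫ ω, X ω * Y ω ∂(Q : Measure Ω)| ≤ 1 + B := fun Q => by
    haveI := cprob Q
    have h := abs_integral_mul_le (Q : Measure Ω) (cXY Q) (cXX Q) (cYY Q)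
    have h2 := cB Q
    calc |∫ ω, X ω * Y ω ∂(Q : Measure Ω)|
        ≤ ((∫ ω, X ω^2 ∂(Q : Measure Ω)) + ∫ ω, Y ω^2 ∂(Q : Measure Ω))/2 := h
    _ ≤ 1 + B := by linarith
  -- mixtures
  have hmix : ∀ (Q₁ Q₂ : convHullP S) (t : ℝ), 0 ≤ t → t ≤ 1 →
      ∃ Q₃ : convHullP S,
        (∫ ω, X ω ∂(Q₃ : Measure Ω))
          = t * (∫ ω, X ω ∂(Q₁ : Measure Ω)) + (1-t) * (∫ ω, X ω ∂(Q₂ : Measure Ω)) ∧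
        (∫ ω, Y ω ∂(Q₃ : Measure Ω))
          = t * (∫ ω, Y ω ∂(Q₁ : Measure Ω)) + (1-t) * (∫ ω, Y ω ∂(Q₂ : Measure Ω)) ∧
        (∫ ω, X ω * Y ω ∂(Q₃ : Measure Ω))
          = t * (∫ ω, X ω * Y ω ∂(Q₁ : Measure Ω))
            + (1-t) * (∫ ω, X ω * Y ω ∂(Q₂ : Measure Ω)) ∧
        (∫ ω, X ω^2 ∂(Q₃ : Measure Ω))
          = t * (∫ ω, X ω^2 ∂(Q₁ : Measure Ω)) + (1-t) * (∫ ω, X ω^2 ∂(Q₂ : Measure Ω)) := by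
    intro Q₁ Q₂ t ht0 ht1
    exact ⟨⟨_, conv_mix Q₁.2 Q₂.2 ht0 ht1⟩,
      integral_mix (cX Q₁) (cX Q₂) ht0 ht1,
      integral_mix (cY Q₁) (cY Q₂) ht0 ht1,
      integral_mix (cXY Q₁) (cXY Q₂) ht0 ht1,
      integral_mix (cXX Q₁) (cXX Q₂) ht0 ht1⟩
  -- bound on covariance
  have covub : ∀ Q : convHullP S, covP (Q : Measure Ω) X Y ≤ (1+B) + (1+B)*(1+B) := fun Q => by
    have hx := abs_le.mp (cXb Q)
    have hy := abs_le.mp (cYb Q)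
    have hxy := abs_le.mp (cXYb Q)
    simp only [covP]
    nlinarith [mul_nonneg (sub_nonneg.mpr hx.2) (sub_nonneg.mpr hy.2),
      mul_nonneg (by linarith [hx.1] : (0:ℝ) ≤ ∫ ω, X ω ∂(Q : Measure Ω) + (1+B))
        (by linarith [hy.1] : (0:ℝ) ≤ ∫ ω, Y ω ∂(Q : Measure Ω) + (1+B))]
  constructor
  · -- part 1
    have hLHS : sSup ((fun P => covP P X Y) '' convHullP S)
        = ⨆ Q : convHullP S, covP (Q : Measure Ω) X Y := by
      rw [Set.image_eq_range]; rfl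
    rw [hLHS]
    set mf : convHullP S → ℝ :=
      fun Q => ((∫ ω, X ω ∂(Q : Measure Ω)) + ∫ ω, Y ω ∂(Q : Measure Ω))/2 with hmf
    have main : ∀ β : ℝ,
        (⨅ α : ℝ, sSup ((fun P =>
          ∫ ω, (((X ω + Y ω)/2 - α)^2 - ((X ω - Y ω)/2 - β)^2) ∂P) '' S))
        = ⨆ Q : convHullP S, (covP (Q : Measure Ω) X Y
            - ((((∫ ω, X ω ∂(Q : Measure Ω)) - ∫ ω, Y ω ∂(Q : Measure Ω)))/2 - β)^2) := by
      intro β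
      set cf : convHullP S → ℝ := fun Q => (∫ ω, X ω * Y ω ∂(Q : Measure Ω))
        + β*((∫ ω, X ω ∂(Q : Measure Ω)) - ∫ ω, Y ω ∂(Q : Measure Ω)) - β^2 with hcf
      set Bc : ℝ := (1+B) + (|β|+1)*(2*(1+B)) + β^2 + 1 with hBc
      have hβnn : 0 ≤ |β| := abs_nonneg β
      have hβ1 := le_abs_self β
      have hβ2 := neg_abs_le β
      have step1 : ∀ α : ℝ,
          sSup ((fun P =>
            ∫ ω, (((X ω + Y ω)/2 - α)^2 - ((X ω - Y ω)/2 - β)^2) ∂P) '' S)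
          = ⨆ Q : convHullP S, (α^2 - 2*mf Q*α + cf Q) := by
        intro α
        have hint : ∀ P ∈ S,
            Integrable (fun ω => ((X ω + Y ω)/2 - α)^2 - ((X ω - Y ω)/2 - β)^2) P := by
          intro P hP
          haveI := hprob P hP
          have h : (fun ω => ((X ω + Y ω)/2 - α)^2 - ((X ω - Y ω)/2 - β)^2)
              = fun ω => (X ω * Y ω) + ((β - α)*X ω + ((-α - β)*Y ω + (α^2 - β^2))) :=
            funext fun ω => by ring
          rw [h]
          exact (iXY P hP).add (((iX P hP).const_mul _).add
            (((iY P hP).const_mul _).add (integrable_const _)))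
        have hbnd : ∀ P ∈ S,
            ∫ ω, (((X ω + Y ω)/2 - α)^2 - ((X ω - Y ω)/2 - β)^2) ∂P
            ≤ (1+B) + (|β - α| + |α + β|) * (1+B) + α^2 := by
          intro P hP
          haveI := hprob P hP
          rw [expand_poly P (iX P hP) (iY P hP) (iXY P hP) α β]
          set QP : convHullP S := ⟨P, mem_conv_self hP⟩
          have h1 := abs_le.mp (cXb QP)
          have h2 := abs_le.mp (cYb QP)
          have h3 := abs_le.mp (cXYb QP)
          have e1 : (β - α)*(∫ ω, X ω ∂P) ≤ |β - α| * (1+B) := by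
            calc (β - α)*(∫ ω, X ω ∂P) ≤ |(β - α)*(∫ ω, X ω ∂P)| := le_abs_self _
            _ = |β - α| * |∫ ω, X ω ∂P| := abs_mul _ _
            _ ≤ |β - α| * (1+B) := mul_le_mul_of_nonneg_left (cXb QP) (abs_nonneg _)
          have e2 : (-α - β)*(∫ ω, Y ω ∂P) ≤ |α + β| * (1+B) := by
            calc (-α - β)*(∫ ω, Y ω ∂P) ≤ |(-α - β)*(∫ ω, Y ω ∂P)| := le_abs_self _
            _ = |α + β| * |∫ ω, Y ω ∂P| := by rw [abs_mul, show |(-α - β)| = |α + β| by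
                  rw [show -α - β = -(α + β) by ring, abs_neg]]
            _ ≤ |α + β| * (1+B) := mul_le_mul_of_nonneg_left (cYb QP) (abs_nonneg _)
          have e3 : (∫ ω, X ω * Y ω ∂P) ≤ 1 + B := le_trans (le_abs_self _) (cXYb QP)
          nlinarith [sq_nonneg β]
        rw [sSup_image_conv hS' hint hbnd]
        apply congrArg
        funext Q
        haveI := cprob Q
        rw [expand_poly (Q : Measure Ω) (cX Q) (cY Q) (cXY Q) α β]
        simp only [hmf, hcf]
        ring
      have hm' : ∀ Q : convHullP S, |mf Q| ≤ Bc := fun Q => by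
        have h1 := abs_le.mp (cXb Q)
        have h2 := abs_le.mp (cYb Q)
        simp only [hmf, hBc]
        rw [abs_le]
        constructor <;> nlinarith [mul_nonneg (by linarith : (0:ℝ) ≤ |β|+1)
          (by linarith : (0:ℝ) ≤ 2*(1+B)), sq_nonneg β]
      have hc' : ∀ Q : convHullP S, |cf Q| ≤ Bc := fun Q => by
        have h1 := abs_le.mp (cXb Q)
        have h2 := abs_le.mp (cYb Q)
        have h3 := abs_le.mp (cXYb Q)
        simp only [hcf, hBc]
        rw [abs_le]
        constructor <;>
          nlinarith [mul_nonneg (by linarith : (0:ℝ) ≤ |β| - β)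
              (by linarith : (0:ℝ) ≤ 2*(1+B) + ((∫ ω, X ω ∂(Q : Measure Ω)) - ∫ ω, Y ω ∂(Q : Measure Ω))),
            mul_nonneg (by linarith : (0:ℝ) ≤ |β| + β)
              (by linarith : (0:ℝ) ≤ 2*(1+B) - ((∫ ω, X ω ∂(Q : Measure Ω)) - ∫ ω, Y ω ∂(Q : Measure Ω))),
            sq_nonneg β]
      have hcv : ∀ (i j : convHullP S) (t : ℝ), 0 ≤ t → t ≤ 1 →
          ∃ k, mf k = t * mf i + (1-t) * mf j ∧ cf k = t * cf i + (1-t) * cf j := by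
        intro i j t ht0 ht1
        obtain ⟨k, hx, hy, hxy, _⟩ := hmix i j t ht0 ht1
        refine ⟨k, ?_, ?_⟩
        · simp only [hmf]; rw [hx, hy]; ring
        · simp only [hcf]; rw [hxy, hx, hy]; ring
      calc (⨅ α : ℝ, sSup ((fun P =>
              ∫ ω, (((X ω + Y ω)/2 - α)^2 - ((X ω - Y ω)/2 - β)^2) ∂P) '' S))
          = ⨅ α : ℝ, ⨆ Q : convHullP S, (α^2 - 2*mf Q*α + cf Q) :=
            congrArg _ (funext step1)
      _ = ⨆ Q : convHullP S, (cf Q - (mf Q)^2) := lemA mf cf Bc hm' hc' hcv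
      _ = ⨆ Q : convHullP S, (covP (Q : Measure Ω) X Y
            - ((((∫ ω, X ω ∂(Q : Measure Ω)) - ∫ ω, Y ω ∂(Q : Measure Ω)))/2 - β)^2) := by
          apply congrArg
          funext Q
          simp only [hmf, hcf, covP]
          ring
    have hmain2 : (⨆ β : ℝ, ⨅ α : ℝ, sSup ((fun P =>
          ∫ ω, (((X ω + Y ω)/2 - α)^2 - ((X ω - Y ω)/2 - β)^2) ∂P) '' S))
        = ⨆ β : ℝ, ⨆ Q : convHullP S, (covP (Q : Measure Ω) X Y
            - ((((∫ ω, X ω ∂(Q : Measure Ω)) - ∫ ω, Y ω ∂(Q : Measure Ω)))/2 - β)^2) :=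
      congrArg _ (funext main)
    rw [hmain2]
    -- now: ⨆ Q, covP = ⨆ β, ⨆ Q, (covP Q - (mV Q - β)^2)
    set K : ℝ := (1+B) + (1+B)*(1+B) with hK
    have bdd1 : ∀ β : ℝ, BddAbove (Set.range fun Q : convHullP S =>
        covP (Q : Measure Ω) X Y
          - ((((∫ ω, X ω ∂(Q : Measure Ω)) - ∫ ω, Y ω ∂(Q : Measure Ω)))/2 - β)^2) := by
      intro β
      refine ⟨K, ?_⟩
      rintro x ⟨Q, rfl⟩
      simp only
      nlinarith [covub Q, sq_nonneg ((((∫ ω, X ω ∂(Q : Measure Ω))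
        - ∫ ω, Y ω ∂(Q : Measure Ω)))/2 - β)]
    have bddcov : BddAbove (Set.range fun Q : convHullP S => covP (Q : Measure Ω) X Y) := by
      refine ⟨K, ?_⟩
      rintro x ⟨Q, rfl⟩
      exact covub Q
    apply le_antisymm
    · refine ciSup_le fun Q => ?_
      have h0 : covP (Q : Measure Ω) X Y = covP (Q : Measure Ω) X Y
          - ((((∫ ω, X ω ∂(Q : Measure Ω)) - ∫ ω, Y ω ∂(Q : Measure Ω)))/2
            - (((∫ ω, X ω ∂(Q : Measure Ω)) - ∫ ω, Y ω ∂(Q : Measure Ω)))/2)^2 := by ring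
      rw [h0]
      have hstep : covP (Q : Measure Ω) X Y
          - ((((∫ ω, X ω ∂(Q : Measure Ω)) - ∫ ω, Y ω ∂(Q : Measure Ω)))/2
            - (((∫ ω, X ω ∂(Q : Measure Ω)) - ∫ ω, Y ω ∂(Q : Measure Ω)))/2)^2
          ≤ ⨆ Q' : convHullP S, (covP (Q' : Measure Ω) X Y
            - ((((∫ ω, X ω ∂(Q' : Measure Ω)) - ∫ ω, Y ω ∂(Q' : Measure Ω)))/2
              - (((∫ ω, X ω ∂(Q : Measure Ω)) - ∫ ω, Y ω ∂(Q : Measure Ω)))/2)^2) :=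
        le_ciSup (bdd1 _) Q
      refine le_trans hstep ?_
      refine le_ciSup (f := fun β : ℝ => ⨆ Q' : convHullP S, (covP (Q' : Measure Ω) X Y
        - ((((∫ ω, X ω ∂(Q' : Measure Ω)) - ∫ ω, Y ω ∂(Q' : Measure Ω)))/2 - β)^2)) ?_ _
      refine ⟨K, ?_⟩
      rintro x ⟨β, rfl⟩
      simp only
      refine ciSup_le fun Q' => ?_
      nlinarith [covub Q', sq_nonneg ((((∫ ω, X ω ∂(Q' : Measure Ω))
        - ∫ ω, Y ω ∂(Q' : Measure Ω)))/2 - β)]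
    · refine ciSup_le fun β => ciSup_le fun Q => ?_
      have h1 : covP (Q : Measure Ω) X Y
          - ((((∫ ω, X ω ∂(Q : Measure Ω)) - ∫ ω, Y ω ∂(Q : Measure Ω)))/2 - β)^2
          ≤ covP (Q : Measure Ω) X Y := by
        nlinarith [sq_nonneg ((((∫ ω, X ω ∂(Q : Measure Ω))
          - ∫ ω, Y ω ∂(Q : Measure Ω)))/2 - β)]
      exact le_trans h1 (le_ciSup bddcov Q)
  · -- part 2
    have hLHS2 : sSup ((fun P => covP P X X) '' convHullP S)
        = ⨆ Q : convHullP S, covP (Q : Measure Ω) X X := by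
      rw [Set.image_eq_range]; rfl
    rw [hLHS2]
    set mf : convHullP S → ℝ := fun Q => ∫ ω, X ω ∂(Q : Measure Ω) with hmf
    set cf : convHullP S → ℝ := fun Q => ∫ ω, X ω^2 ∂(Q : Measure Ω) with hcf
    have step2 : ∀ μ : ℝ,
        sSup ((fun P => ∫ ω, (X ω - μ)^2 ∂P) '' S)
        = ⨆ Q : convHullP S, (μ^2 - 2*mf Q*μ + cf Q) := by
      intro μ
      have hint : ∀ P ∈ S, Integrable (fun ω => (X ω - μ)^2) P := by
        intro P hP
        haveI := hprob P hP
        exact ((hXY P hP).1.sub (memLp_const μ)).integrable_sq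
      have hbnd : ∀ P ∈ S, ∫ ω, (X ω - μ)^2 ∂P ≤ μ^2 + 2 * |μ| * (1+B) + B := by
        intro P hP
        haveI := hprob P hP
        rw [expand_sq P (iX P hP) (iXX P hP) μ]
        set QP : convHullP S := ⟨P, mem_conv_self hP⟩
        have h1 := abs_le.mp (cXb QP)
        have h2 := cB QP
        have h3 := cYYnn QP
        have hμ1 := le_abs_self μ
        have hμ2 := neg_abs_le μ
        have e1 : -(2*(∫ ω, X ω ∂P)*μ) ≤ 2 * |μ| * (1+B) := by
          nlinarith [mul_nonneg (by linarith : (0:ℝ) ≤ |μ| - μ)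
              (by linarith [h1.1] : (0:ℝ) ≤ (1+B) + ∫ ω, X ω ∂P),
            mul_nonneg (by linarith : (0:ℝ) ≤ |μ| + μ)
              (by linarith [h1.2] : (0:ℝ) ≤ (1+B) - ∫ ω, X ω ∂P)]
        linarith
      rw [sSup_image_conv hS' hint hbnd]
      apply congrArg
      funext Q
      haveI := cprob Q
      rw [expand_sq (Q : Measure Ω) (cX Q) (cXX Q) μ]
    have hm' : ∀ Q : convHullP S, |mf Q| ≤ 1 + B + B := fun Q => by
      simp only [hmf]
      have := cXb Q
      linarith [abs_nonneg (∫ ω, X ω ∂(Q : Measure Ω))]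
    have hc' : ∀ Q : convHullP S, |cf Q| ≤ 1 + B + B := fun Q => by
      simp only [hcf]
      rw [abs_le]
      constructor
      · linarith [cXXnn Q]
      · linarith [cB Q, cYYnn Q]
    have hcv : ∀ (i j : convHullP S) (t : ℝ), 0 ≤ t → t ≤ 1 →
        ∃ k, mf k = t * mf i + (1-t) * mf j ∧ cf k = t * cf i + (1-t) * cf j := by
      intro i j t ht0 ht1
      obtain ⟨k, hx, _, _, hxx⟩ := hmix i j t ht0 ht1
      exact ⟨k, by simp only [hmf]; rw [hx], by simp only [hcf]; rw [hxx]⟩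
    calc (⨆ Q : convHullP S, covP (Q : Measure Ω) X X)
        = ⨆ Q : convHullP S, (cf Q - (mf Q)^2) := by
          apply congrArg
          funext Q
          simp only [hmf, hcf, covP]
          have hXX : ∀ ω : Ω, X ω * X ω = X ω^2 := fun ω => by ring
          simp_rw [hXX]
          ring
    _ = ⨅ μ : ℝ, ⨆ Q : convHullP S, (μ^2 - 2*mf Q*μ + cf Q) :=
        (lemA mf cf (1 + B + B) hm' hc' hcv).symm
    _ = ⨅ μ : ℝ, sSup ((fun P => ∫ ω, (X ω - μ)^2 ∂P) '' S) :=
        congrArg _ (funext fun μ => (step2 μ).symm)
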